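/- Let T be a convex non-degenerate n-gon in ℝ² and K_T = P_T(S_{n-1}) the reference polygon obtained by the orthogonal-projection part of the SVD of the vertex matrix. Then the in-radius of K_T is at least √(1/(n(n-1))) and the outer-radius of K_T is at most √((n-1)/n); consequently the ratio of in-radius to outer-radius of K_T is at least 1/(n-1). -/

import Mathlib

open Matrix


lemma sum_if_eq' {n : ℕ} (a : ℕ) (ha : a < n) (f : Fin n → ℝ) :
    (∑ j : Fin n, if a = (j : ℕ) then f j else 0) = f ⟨a, ha⟩ := by
  rw [Finset.sum_eq_single (⟨a, ha⟩ : Fin n)]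
  · simp
  · intro b _ hb
    rw [if_neg]
    intro h
    exact hb (Fin.ext h.symm)
  · simp

lemma dot_AA {m k : Type*} [Fintype m] [Fintype k] (A : Matrix m k ℝ) (x y : k → ℝ) :
    (A *ᵥ x) ⬝ᵥ (A *ᵥ y) = ((Aᵀ * A) *ᵥ x) ⬝ᵥ y := by
  rw [Matrix.dotProduct_mulVec, ← Matrix.mulVec_transpose, Matrix.mulVec_mulVec]


set_option maxHeartbeats 1000000 in
/-- For a convex non-degenerate `n`-gon `T` (vertex matrix `B`, columns in convex position,
arithmetic mean at the origin) with SVD `B = UΣVᵀ`, `σ₁ ≥ σ₂ > 0`, the reference polygon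
`K_T = (UQVᵀ)(S_{n-1})` has in-radius at least `√(1/(n(n-1)))` and outer-radius at most
`√((n-1)/n)`; consequently the ratio of in-radius to outer-radius is at least `1/(n-1)`. -/
theorem stmt_11 (n : ℕ) (hn : 3 ≤ n)
    (B S : Matrix (Fin 2) (Fin n) ℝ) (U : Matrix (Fin 2) (Fin 2) ℝ)
    (V : Matrix (Fin n) (Fin n) ℝ) (σ₁ σ₂ : ℝ)
    (hσ : σ₁ ≥ σ₂) (hσ₂ : 0 < σ₂)
    (hU : Uᵀ * U = 1) (hV : Vᵀ * V = 1)
    (hS : ∀ (i : Fin 2) (j : Fin n),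
      S i j = if (i : ℕ) = (j : ℕ) then (if (i : ℕ) = 0 then σ₁ else σ₂) else 0)
    (hSVD : B = U * S * Vᵀ)
    (hsum : B.mulVec (fun _ => (1 : ℝ)) = 0)
    -- the vertices (columns of `B`) are in strictly convex position and no three collinear
    (hconv : ∀ i : Fin n,
      (fun r => B r i) ∉ convexHull ℝ {p : Fin 2 → ℝ | ∃ j ≠ i, p = fun r => B r j})
    (hnodeg : ∀ i j k : Fin n, i ≠ j → j ≠ k → i ≠ k →
      ¬ Collinear ℝ ({fun r => B r i, fun r => B r j, fun r => B r k} : Set (Fin 2 → ℝ)))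
    (Q : Matrix (Fin 2) (Fin n) ℝ)
    (hQ : ∀ (i : Fin 2) (j : Fin n), Q i j = if (i : ℕ) = (j : ℕ) then 1 else 0)
    (K : Set (EuclideanSpace ℝ (Fin 2)))
    (hK : K = (fun l => (EuclideanSpace.equiv (Fin 2) ℝ).symm ((U * Q * Vᵀ).mulVec l)) ''
      stdSimplex ℝ (Fin n))
    (inradius outradius : ℝ)
    (hin : inradius = sSup {r : ℝ | ∃ c, Metric.closedBall c r ⊆ K})
    (hout : outradius = sInf {r : ℝ | 0 ≤ r ∧ ∃ c, K ⊆ Metric.closedBall c r}) :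
    Real.sqrt (1 / (n * (n - 1))) ≤ inradius ∧
    outradius ≤ Real.sqrt ((n - 1) / n) ∧
    1 / (n - 1) ≤ inradius / outradius := by
  have hn3 : (3 : ℝ) ≤ (n : ℝ) := by exact_mod_cast hn
  have hnpos : (0 : ℝ) < n := by linarith
  have hn1 : (0 : ℝ) < (n : ℝ) - 1 := by linarith
  set r : ℝ := Real.sqrt (1 / (n * (n - 1))) with hr
  set R : ℝ := Real.sqrt ((n - 1) / n) with hR
  have hrpos : 0 < r := Real.sqrt_pos.mpr (by positivity)
  have hRpos : 0 < R := Real.sqrt_pos.mpr (by positivity)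
  have hUUT : U * Uᵀ = 1 := mul_eq_one_comm.mp hU
  have hVVT : V * Vᵀ = 1 := mul_eq_one_comm.mp hV
  have hidx : ∀ i : Fin 2, (i : ℕ) < n := fun i => lt_of_lt_of_le i.2 (by omega)
  have hQQT : Q * Qᵀ = 1 := by
    ext i k
    simp only [Matrix.mul_apply, Matrix.transpose_apply, hQ, ite_mul, one_mul, zero_mul]
    rw [sum_if_eq' (i : ℕ) (hidx i) (fun j => if (k : ℕ) = (j : ℕ) then 1 else 0),
      Matrix.one_apply]
    simp [Fin.ext_iff, eq_comm]
  have hQmv : ∀ (t : Fin n → ℝ) (i : Fin 2), (Q *ᵥ t) i = t ⟨i, hidx i⟩ := by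
    intro t i
    simp only [Matrix.mulVec, dotProduct, hQ, ite_mul, one_mul, zero_mul]
    exact sum_if_eq' _ _ t
  set ones : Fin n → ℝ := fun _ => (1 : ℝ) with hones
  set c : Fin n → ℝ := Vᵀ *ᵥ ones with hcdef
  have hSc : S *ᵥ c = 0 := by
    have h0 : U *ᵥ ((S * Vᵀ) *ᵥ ones) = 0 := by
      rw [Matrix.mulVec_mulVec, ← Matrix.mul_assoc, ← hSVD]; exact hsum
    have h1 := congrArg (fun w => Uᵀ *ᵥ w) h0
    simp only [Matrix.mulVec_mulVec, Matrix.mulVec_zero] at h1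
    rw [← Matrix.mul_assoc, hU, Matrix.one_mul] at h1
    rw [hcdef, Matrix.mulVec_mulVec]
    exact h1
  have hc0 : ∀ i : Fin 2, c ⟨i, hidx i⟩ = 0 := by
    intro i
    have hcomp := congrFun hSc i
    simp only [Matrix.mulVec, dotProduct, hS, ite_mul, zero_mul, Pi.zero_apply,
      mul_ite] at hcomp
    rw [sum_if_eq' (i : ℕ) (hidx i)
      (fun j => if (i : ℕ) = 0 then σ₁ * c j else σ₂ * c j)] at hcomp
    have hσ₁ : (0:ℝ) < σ₁ := lt_of_lt_of_le hσ₂ hσ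
    split_ifs at hcomp with h
    · exact (mul_eq_zero.mp hcomp).resolve_left (by positivity)
    · exact (mul_eq_zero.mp hcomp).resolve_left (by positivity)
  have hM1 : (U * Q * Vᵀ) *ᵥ ones = 0 := by
    have hqv : (Q * Vᵀ) *ᵥ ones = 0 := by
      funext i
      rw [← Matrix.mulVec_mulVec, ← hcdef, hQmv c i]
      exact (hc0 i).trans rfl
    calc (U * Q * Vᵀ) *ᵥ ones = U *ᵥ ((Q * Vᵀ) *ᵥ ones) := by
          rw [Matrix.mulVec_mulVec, Matrix.mul_assoc]
      _ = 0 := by rw [hqv, Matrix.mulVec_zero]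
  have hMW : (U * Q * Vᵀ) * (V * Qᵀ * Uᵀ) = 1 := by
    simp only [Matrix.mul_assoc]
    rw [← Matrix.mul_assoc Vᵀ V, hV, Matrix.one_mul, ← Matrix.mul_assoc Q Qᵀ, hQQT,
      Matrix.one_mul, hUUT]
  have hnorm : ∀ v : Fin 2 → ℝ,
      ‖(EuclideanSpace.equiv (Fin 2) ℝ).symm v‖ = Real.sqrt (v ⬝ᵥ v) := by
    intro v
    rw [EuclideanSpace.norm_eq]
    congr 1
    rw [dotProduct]
    refine Finset.sum_congr rfl fun i _ => ?_
    simp [Real.norm_eq_abs, sq_abs, sq]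
  -- inner ball
  have hball_in : Metric.closedBall (0 : EuclideanSpace ℝ (Fin 2)) r ⊆ K := by
    intro y hy
    set z : Fin 2 → ℝ := (EuclideanSpace.equiv (Fin 2) ℝ) y with hzdef
    have hyz : (EuclideanSpace.equiv (Fin 2) ℝ).symm z = y :=
      (EuclideanSpace.equiv (Fin 2) ℝ).symm_apply_apply y
    have hzz : z ⬝ᵥ z ≤ 1 / (n * (n - 1)) := by
      have h1 : ‖y‖ ≤ r := by simpa using hy
      rw [← hyz, hnorm] at h1
      nlinarith [Real.sq_sqrt (show (0:ℝ) ≤ z ⬝ᵥ z from Finset.sum_nonneg fun i _ => mul_self_nonneg _), Real.sqrt_nonneg (z ⬝ᵥ z),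
        Real.sq_sqrt (le_of_lt (show (0:ℝ) < 1 / (n * (n-1)) by positivity)),
        Real.sqrt_nonneg (1 / ((n:ℝ) * (n-1)))]
    set w : Fin n → ℝ := (V * Qᵀ * Uᵀ) *ᵥ z with hwdef
    have hWT : (V * Qᵀ * Uᵀ)ᵀ = U * Q * Vᵀ := by
      simp [Matrix.transpose_mul, Matrix.mul_assoc]
    have hww : w ⬝ᵥ w = z ⬝ᵥ z := by
      rw [hwdef, dot_AA, hWT, hMW, Matrix.one_mulVec]
    have hsw : ∑ j, w j = 0 := by
      have h2 : ones ⬝ᵥ w = 0 := by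
        rw [hwdef, Matrix.dotProduct_mulVec, ← Matrix.mulVec_transpose, hWT, hM1,
          zero_dotProduct]
      simpa [dotProduct, hones] using h2
    have hwbound : ∀ j : Fin n, |w j| ≤ 1 / n := by
      intro j
      have hCS := Finset.sum_mul_sq_le_sq_mul_sq Finset.univ w
        (fun k => (if k = j then (1:ℝ) else 0) - 1 / n)
      have hval : ∑ k, w k * ((if k = j then (1:ℝ) else 0) - 1 / n) = w j := by
        simp [mul_sub, Finset.sum_sub_distrib, Finset.mul_sum, mul_ite,
          ← Finset.sum_mul, hsw]
      have hexp : ∀ k : Fin n, ((if k = j then (1:ℝ) else 0) - 1 / n) ^ 2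
          = (if k = j then (1:ℝ) - 2 / n else 0) + 1 / (n:ℝ) ^ 2 := by
        intro k; split_ifs <;> ring
      have hg : ∑ k : Fin n, ((if k = j then (1:ℝ) else 0) - 1 / (n:ℝ)) ^ 2 = 1 - 1 / (n:ℝ) := by
        simp only [hexp, Finset.sum_add_distrib, Finset.sum_ite_eq', Finset.mem_univ,
          if_true, Finset.sum_const, Finset.card_univ, Fintype.card_fin, nsmul_eq_mul]
        field_simp
        ring
      rw [hval, hg] at hCS
      have hww2 : ∑ k, w k ^ 2 = w ⬝ᵥ w := by
        rw [dotProduct]; exact Finset.sum_congr rfl fun k _ => sq (w k)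
      have hwsq : w j ^ 2 ≤ (1 / (n:ℝ)) ^ 2 := by
        rw [hww2, hww] at hCS
        have h3 : (0:ℝ) ≤ 1 - 1/n := by
          rw [sub_nonneg]; rw [div_le_one hnpos]; linarith
        calc w j ^ 2 ≤ (z ⬝ᵥ z) * (1 - 1/n) := hCS
          _ ≤ (1 / (n * (n-1))) * (1 - 1/n) := by
              exact mul_le_mul_of_nonneg_right hzz h3
          _ = (1 / (n:ℝ)) ^ 2 := by field_simp
      have := Real.sqrt_le_sqrt hwsq
      rwa [Real.sqrt_sq_eq_abs, Real.sqrt_sq (by positivity)] at this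
    set x : Fin n → ℝ := fun j => 1 / n + w j with hxdef
    have hxmem : x ∈ stdSimplex ℝ (Fin n) := by
      constructor
      · intro j
        have h4 := abs_le.mp (hwbound j)
        simp only [hxdef]
        linarith [h4.1]
      · simp only [hxdef]
        rw [Finset.sum_add_distrib, hsw, Finset.sum_const, Finset.card_univ,
          Fintype.card_fin, nsmul_eq_mul, add_zero]
        field_simp
    have him : (U * Q * Vᵀ) *ᵥ x = z := by
      have hx : x = (n:ℝ)⁻¹ • ones + w := by
        funext j; simp [hxdef, hones, smul_eq_mul, one_div]
      rw [hx, Matrix.mulVec_add, Matrix.mulVec_smul, hM1, smul_zero, zero_add, hwdef,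
        Matrix.mulVec_mulVec, hMW, Matrix.one_mulVec]
    rw [hK]
    exact ⟨x, hxmem, by
      show (EuclideanSpace.equiv (Fin 2) ℝ).symm ((U * Q * Vᵀ) *ᵥ x) = y
      rw [him, hyz]⟩
  -- outer ball
  have hball_out : K ⊆ Metric.closedBall (0 : EuclideanSpace ℝ (Fin 2)) R := by
    rw [hK]
    rintro _ ⟨x, hx, rfl⟩
    obtain ⟨hx0, hx1⟩ := hx
    simp only [Metric.mem_closedBall, dist_zero_right]
    rw [hnorm]
    set v : Fin n → ℝ := fun j => x j - 1 / n with hvdef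
    have hMx : (U * Q * Vᵀ) *ᵥ x = (U * Q * Vᵀ) *ᵥ v := by
      have hxv : x = (n:ℝ)⁻¹ • ones + v := by
        funext j; simp [hvdef, hones, smul_eq_mul, one_div]
      rw [hxv, Matrix.mulVec_add, Matrix.mulVec_smul, hM1, smul_zero, zero_add]
    set t : Fin n → ℝ := Vᵀ *ᵥ v with htdef
    have htt : t ⬝ᵥ t = v ⬝ᵥ v := by
      rw [htdef, dot_AA, Matrix.transpose_transpose, hVVT, Matrix.one_mulVec]
    have hs : (U * Q * Vᵀ) *ᵥ v = U *ᵥ (Q *ᵥ t) := by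
      rw [htdef, Matrix.mulVec_mulVec, Matrix.mulVec_mulVec, Matrix.mul_assoc]
    have huu : ((U * Q * Vᵀ) *ᵥ v) ⬝ᵥ ((U * Q * Vᵀ) *ᵥ v) = (Q *ᵥ t) ⬝ᵥ (Q *ᵥ t) := by
      rw [hs, dot_AA, hU, Matrix.one_mulVec]
    have hqt : (Q *ᵥ t) ⬝ᵥ (Q *ᵥ t) ≤ t ⬝ᵥ t := by
      have hne : (⟨(0 : Fin 2), hidx 0⟩ : Fin n) ≠ ⟨(1 : Fin 2), hidx 1⟩ := by
        simp [Fin.ext_iff]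
      have h2 : (Q *ᵥ t) ⬝ᵥ (Q *ᵥ t)
          = t ⟨(0 : Fin 2), hidx 0⟩ * t ⟨(0 : Fin 2), hidx 0⟩
            + t ⟨(1 : Fin 2), hidx 1⟩ * t ⟨(1 : Fin 2), hidx 1⟩ := by
        rw [dotProduct, Fin.sum_univ_two, hQmv, hQmv]
      rw [h2, dotProduct]
      calc t ⟨(0 : Fin 2), hidx 0⟩ * t ⟨(0 : Fin 2), hidx 0⟩
            + t ⟨(1 : Fin 2), hidx 1⟩ * t ⟨(1 : Fin 2), hidx 1⟩
          = ∑ j ∈ ({⟨(0 : Fin 2), hidx 0⟩, ⟨(1 : Fin 2), hidx 1⟩} : Finset (Fin n)),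
              t j * t j := by rw [Finset.sum_pair hne]
        _ ≤ ∑ j, t j * t j := Finset.sum_le_sum_of_subset_of_nonneg
              (Finset.subset_univ _) (fun j _ _ => mul_self_nonneg _)
    have hvv : v ⬝ᵥ v ≤ ((n:ℝ) - 1) / n := by
      have hsq : ∑ j, x j ^ 2 ≤ 1 := by
        have h5 := Finset.sum_sq_le_sq_sum_of_nonneg (s := Finset.univ)
          (f := x) (fun j _ => hx0 j)
        rwa [hx1, one_pow] at h5
      have hexp : v ⬝ᵥ v = (∑ j, x j ^ 2) - 2 / n * (∑ j, x j) + n * (1 / (n:ℝ) ^ 2) := by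
        rw [dotProduct]
        calc ∑ j, v j * v j
            = ∑ j, (x j ^ 2 - 2 / n * x j + 1 / (n:ℝ) ^ 2) :=
              Finset.sum_congr rfl fun j _ => by simp only [hvdef]; ring
          _ = _ := by
              rw [Finset.sum_add_distrib, Finset.sum_sub_distrib, ← Finset.mul_sum,
                Finset.sum_const, Finset.card_univ, Fintype.card_fin, nsmul_eq_mul]
      rw [hexp, hx1]
      have h6 : (n:ℝ) * (1 / (n:ℝ) ^ 2) = 1 / n := by field_simp
      have h8 : (2:ℝ) / n * 1 = 2 / n := mul_one _
      have h9 : ((n:ℝ) - 1) / n = 1 - 2 / (n:ℝ) + 1 / (n:ℝ) := by field_simp; ring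
      rw [h6, h8, h9]
      linarith [hsq]
    rw [hMx]
    calc Real.sqrt (((U * Q * Vᵀ) *ᵥ v) ⬝ᵥ ((U * Q * Vᵀ) *ᵥ v))
        ≤ Real.sqrt (((n:ℝ) - 1) / n) := by
          apply Real.sqrt_le_sqrt
          rw [huu]
          exact le_trans hqt (htt.trans_le hvv)
      _ = R := rfl
  -- glue
  set e : EuclideanSpace ℝ (Fin 2) := EuclideanSpace.single 0 (1:ℝ) with hedef
  have he : ‖e‖ = 1 := by rw [hedef, EuclideanSpace.norm_single]; simp
  have hbdd : BddAbove {r' : ℝ | ∃ c, Metric.closedBall c r' ⊆ K} := by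
    refine ⟨2 * R, ?_⟩
    rintro r' ⟨cc, hcc⟩
    by_cases h : r' < 0
    · linarith
    push_neg at h
    have hc1 : cc ∈ K := hcc (Metric.mem_closedBall_self h)
    have hp : cc + r' • e ∈ K := by
      apply hcc
      simp only [Metric.mem_closedBall, dist_eq_norm, add_sub_cancel_left, norm_smul, he,
        mul_one, Real.norm_eq_abs]
      exact le_of_eq (abs_of_nonneg h)
    have h1 : ‖cc‖ ≤ R := by
      have := hball_out hc1
      simpa [Metric.mem_closedBall, dist_zero_right] using this
    have h2 : ‖cc + r' • e‖ ≤ R := by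
      have := hball_out hp
      simpa [Metric.mem_closedBall, dist_zero_right] using this
    have h3 : ‖(cc + r' • e) - cc‖ = r' := by
      simp [norm_smul, he, abs_of_nonneg h]
    calc r' = ‖(cc + r' • e) - cc‖ := h3.symm
      _ ≤ ‖cc + r' • e‖ + ‖cc‖ := norm_sub_le _ _
      _ ≤ 2 * R := by linarith
  have hrin : r ≤ inradius := by
    rw [hin]
    exact le_csSup hbdd ⟨0, hball_in⟩
  have hRout : outradius ≤ R := by
    rw [hout]
    exact csInf_le ⟨0, fun b hb => hb.1⟩ ⟨hRpos.le, 0, hball_out⟩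
  have hrout : r ≤ outradius := by
    rw [hout]
    have hne : {r' : ℝ | 0 ≤ r' ∧ ∃ c, K ⊆ Metric.closedBall c r'}.Nonempty :=
      ⟨R, hRpos.le, 0, hball_out⟩
    apply le_csInf hne
    rintro b ⟨hb0, cc, hcc⟩
    have hp1 : (r • e : EuclideanSpace ℝ (Fin 2)) ∈ K := by
      apply hball_in
      simp only [Metric.mem_closedBall, dist_zero_right, norm_smul, he, mul_one,
        Real.norm_eq_abs]
      exact le_of_eq (abs_of_nonneg hrpos.le)
    have hp2 : ((-r) • e : EuclideanSpace ℝ (Fin 2)) ∈ K := by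
      apply hball_in
      simp only [Metric.mem_closedBall, dist_zero_right, norm_smul, he, mul_one,
        Real.norm_eq_abs]
      rw [abs_neg, abs_of_nonneg hrpos.le]
    have hd : dist (r • e : EuclideanSpace ℝ (Fin 2)) ((-r) • e) = 2 * r := by
      rw [dist_eq_norm, ← sub_smul, norm_smul, he, mul_one, Real.norm_eq_abs]
      rw [show r - (-r) = 2 * r by ring, abs_of_nonneg (by linarith)]
    have ht1 : dist (r • e : EuclideanSpace ℝ (Fin 2)) cc ≤ b := hcc hp1
    have ht2 : dist ((-r) • e : EuclideanSpace ℝ (Fin 2)) cc ≤ b := hcc hp2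
    have := dist_triangle (r • e : EuclideanSpace ℝ (Fin 2)) cc ((-r) • e)
    rw [dist_comm cc] at this
    linarith [hd ▸ this]
  have houtpos : 0 < outradius := lt_of_lt_of_le hrpos hrout
  have hinnn : 0 ≤ inradius := le_trans hrpos.le hrin
  refine ⟨hrin, hRout, ?_⟩
  have hratio : r / R = 1 / ((n:ℝ) - 1) := by
    rw [hr, hR, ← Real.sqrt_div (show (0:ℝ) ≤ 1 / (n * (n-1)) by positivity)]
    rw [show (1 / ((n:ℝ) * (n-1))) / (((n:ℝ)-1)/n) = (1 / ((n:ℝ)-1)) ^ 2 by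
      field_simp]
    exact Real.sqrt_sq (by positivity)
  calc 1 / ((n:ℝ) - 1) = r / R := hratio.symm
    _ ≤ inradius / outradius := div_le_div₀ hinnn hrin houtpos hRout
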